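/- In the equational theory over {w, e, +, ·} with equations x+e=x, e+x=x, (x+y)+z=x+(y+z), (x+y)·z=y·(x·z), e·x=x, w·(x+y)=(w·x)+(w·y), (w·x)·y=y+x, w·e=e (i.e., the fragment without d), there are no non-trivial quines: the only normal form t with t·e ≡ t is e. -/
import Mathlib


/-- Ground terms over constants w, e with binary operations + (add) and · (app). -/
inductive Tm : Type
  | w : Tm
  | e : Tm
  | add : Tm → Tm → Tm
  | app : Tm → Tm → Tm
  deriving DecidableEq

open Tm

/-- Root rewrite steps: instances of the oriented equations (fragment without d). -/
inductive Root : Tm → Tm → Prop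
  | addE (x) : Root (add x e) x
  | eAdd (x) : Root (add e x) x
  | assoc (x y z) : Root (add (add x y) z) (add x (add y z))
  | appAdd (x y z) : Root (app (add x y) z) (app y (app x z))
  | appE (x) : Root (app e x) x
  | wAdd (x y) : Root (app w (add x y)) (add (app w x) (app w y))
  | wApp (x y) : Root (app (app w x) y) (add y x)
  | wE : Root (app w e) e

/-- One rewrite step: a root step applied at some subterm position. -/
inductive Step : Tm → Tm → Prop
  | root {t u} : Root t u → Step t u
  | addL {t t' u} : Step t t' → Step (add t u) (add t' u)
  | addR {t u u'} : Step u u' → Step (add t u) (add t u')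
  | appL {t t' u} : Step t t' → Step (app t u) (app t' u)
  | appR {t u u'} : Step u u' → Step (app t u) (app t u')

/-- A normal form is a term to which no rule applies. -/
def NormalForm (t : Tm) : Prop := ∀ u, ¬ Step t u

/-- Provable equality in the equational theory. -/
def TermEq : Tm → Tm → Prop := Relation.EqvGen Step

/-! ### A model in `List ℕ` -/

/-- Action of a single atom (of "quote depth" k) on a list. -/
def act : ℕ → List ℕ → List ℕ
  | 0, acc => acc.map (· + 1)
  | k+1, acc => acc ++ [k]

/-- Application in the model: fold the atoms of `f` over `z`. -/
def appM (f z : List ℕ) : List ℕ := f.foldl (fun acc k => act k acc) z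

lemma appM_nil (z : List ℕ) : appM [] z = z := rfl

lemma appM_cons (k : ℕ) (L z : List ℕ) : appM (k :: L) z = appM L (act k z) := rfl

lemma appM_append (a b z : List ℕ) : appM (a ++ b) z = appM b (appM a z) := by
  simp [appM, List.foldl_append]

lemma appM_w (z : List ℕ) : appM [0] z = z.map (· + 1) := rfl

lemma appM_map_succ (x z : List ℕ) : appM (x.map (· + 1)) z = z ++ x := by
  induction x generalizing z with
  | nil => simp [appM]
  | cons k x ih =>
    simp only [List.map_cons, appM_cons, act, ih, List.append_assoc, List.singleton_append]

/-- Evaluation of terms in the model. -/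
def eval : Tm → List ℕ
  | .w => [0]
  | .e => []
  | .add x y => eval x ++ eval y
  | .app x y => appM (eval x) (eval y)

lemma eval_root {s t : Tm} (h : Root s t) : eval s = eval t := by
  cases h <;>
    simp [eval, appM_append, appM_map_succ, appM_w, appM_nil, List.append_assoc]

lemma eval_step {s t : Tm} (h : Step s t) : eval s = eval t := by
  induction h with
  | root h => exact eval_root h
  | addL _ ih => simp [eval, ih]
  | addR _ ih => simp [eval, ih]
  | appL _ ih => simp [eval, ih]
  | appR _ ih => simp [eval, ih]

lemma eval_eq {s t : Tm} (h : TermEq s t) : eval s = eval t := by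
  induction h with
  | rel _ _ h => exact eval_step h
  | refl => rfl
  | symm _ _ _ ih => exact ih.symm
  | trans _ _ _ _ _ ih1 ih2 => exact ih1.trans ih2

/-! ### Fixed point analysis in the model -/

lemma length_appM (L z : List ℕ) :
    (appM L z).length + L.count 0 = z.length + L.length := by
  induction L generalizing z with
  | nil => simp [appM]
  | cons k L ih =>
    rw [appM_cons]
    cases k with
    | zero =>
      have h := ih (z.map (· + 1))
      simp only [List.length_map] at h
      show (appM L (z.map (· + 1))).length + (0 :: L).count 0 = z.length + (0 :: L).length
      simp only [List.count_cons, List.length_cons]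
      norm_num
      omega
    | succ k =>
      have h := ih (z ++ [k])
      simp only [List.length_append, List.length_cons, List.length_nil] at h
      show (appM L (z ++ [k])).length + ((k+1) :: L).count 0 = z.length + ((k+1) :: L).length
      simp only [List.count_cons, List.length_cons]
      norm_num
      omega

lemma appM_of_ne_zero (L : List ℕ) (z : List ℕ) (h : ∀ k ∈ L, k ≠ 0) :
    appM L z = z ++ L.map (· - 1) := by
  induction L generalizing z with
  | nil => simp [appM]
  | cons k L ih =>
    rw [appM_cons]
    cases k with
    | zero => exact absurd rfl (h 0 (by simp))
    | succ k =>
      rw [ih _ (fun a ha => h a (by simp [ha]))]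
      simp [act]

lemma appM_fixed {L : List ℕ} (h : appM L [] = L) : L = [] := by
  have hlen := length_appM L []
  rw [h] at hlen
  have hcount : L.count 0 = 0 := by simp at hlen; omega
  have hz : ∀ k ∈ L, k ≠ 0 := by
    intro k hk h0
    subst h0
    have := List.count_pos_iff.mpr hk
    omega
  have h2 := appM_of_ne_zero L [] hz
  rw [h, List.nil_append] at h2
  cases L with
  | nil => rfl
  | cons k L =>
    have hk : k ≠ 0 := hz k (by simp)
    have : k = k - 1 := by
      have := congrArg List.head? h2
      simpa using this
    omega

/-! ### Normal form analysis -/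

lemma nf_app_head (a : Tm) : ∀ b, NormalForm (app a b) → a = w := by
  induction a with
  | w => intros; rfl
  | e => intro b h; exact absurd (Step.root (Root.appE b)) (h b)
  | add x y _ _ => intro b h; exact absurd (Step.root (Root.appAdd x y b)) (h _)
  | app a1 b1 ih1 _ =>
    intro b h
    have ha : NormalForm (app a1 b1) := fun u hs => h _ (Step.appL hs)
    have := ih1 b1 ha
    subst this
    exact absurd (Step.root (Root.wApp b1 b)) (h _)

lemma eval_nil_eq_e : ∀ t : Tm, NormalForm t → eval t = [] → t = e := by
  intro t
  induction t with
  | e => intros; rfl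
  | w => intro _ h; simp [eval] at h
  | add x y ihx ihy =>
    intro h hev
    simp only [eval, List.append_eq_nil_iff] at hev
    have hx : NormalForm x := fun u hs => h _ (Step.addL hs)
    have := ihx hx hev.1
    subst this
    exact absurd (Step.root (Root.eAdd y)) (h y)
  | app x y ihx ihy =>
    intro h hev
    have hw := nf_app_head x y h
    subst hw
    have hy0 : eval y = [] := by
      have : (eval y).map (· + 1) = [] := by
        simpa [eval, appM_w] using hev
      simpa using this
    have hy : NormalForm y := fun u hs => h _ (Step.appR hs)
    have := ihy hy hy0
    subst this
    exact absurd (Step.root Root.wE) (h e)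

/-- in the fragment without d, there are no non-trivial quines:
the only normal form t with t·e ≡ t is e. -/
theorem no_quines_without_d :
    ∀ t : Tm, NormalForm t → TermEq (app t e) t → t = e := by
  intro t hnf heq
  have hev : eval (app t e) = eval t := eval_eq heq
  have hfix : appM (eval t) [] = eval t := hev
  exact eval_nil_eq_e t hnf (appM_fixed hfix)
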